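/- Every arrangement of subtori admits a positive system: given a complex torus T with character lattice Λ ≅ ℤ^d and finitely many subtori S_1,…,S_n with associated saturated subgroups Λ_i ⊆ Λ (the characters constant on S_i), there exist a ℤ-basis B of Λ and ℤ-bases B_i of each Λ_i such that every element of every B_i has nonnegative coordinates in the basis B. -/

import Mathlib

open Finset

private lemma digit_zero (N : ℤ) (hN : 0 < N) :
    ∀ (d : ℕ) (w : Fin d → ℤ), (∀ j, |w j| < N) →
      (∑ j : Fin d, N ^ (j : ℕ) * w j = 0) → ∀ j, w j = 0 := by
  intro d
  induction d with
  | zero => intro w _ _ j; exact j.elim0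
  | succ d ih =>
    intro w hb hs
    rw [Fin.sum_univ_succ] at hs
    simp only [Fin.val_zero, pow_zero, one_mul] at hs
    have hsum : ∑ i : Fin d, N ^ ((i.succ : Fin (d+1)) : ℕ) * w i.succ
        = N * ∑ i : Fin d, N ^ (i : ℕ) * w i.succ := by
      rw [Finset.mul_sum]
      refine Finset.sum_congr rfl fun i _ => ?_
      rw [Fin.val_succ, pow_succ]
      ring
    rw [hsum] at hs
    have hdvd : N ∣ w 0 := ⟨-∑ i : Fin d, N ^ (i : ℕ) * w i.succ, by linarith⟩
    have h0 : w 0 = 0 := Int.eq_zero_of_abs_lt_dvd hdvd (hb 0)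
    have htail : ∑ i : Fin d, N ^ (i : ℕ) * w i.succ = 0 := by
      rcases mul_eq_zero.mp (by linarith : N * ∑ i : Fin d, N ^ (i : ℕ) * w i.succ = 0) with h | h
      · exact absurd h hN.ne'
      · exact h
    have := ih (fun i => w i.succ) (fun i => hb i.succ) htail
    intro j
    refine Fin.cases h0 (fun i => this i) j

private lemma exists_nonneg_basis (d : ℕ) (N : ℤ) (hN : 1 ≤ N) :
    ∃ B : Module.Basis (Fin (d+1)) ℤ (Fin (d+1) → ℤ),
      ∀ w : Fin (d+1) → ℤ, (∀ j, |w j| < N) →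
        1 ≤ ∑ j : Fin (d+1), N ^ (j : ℕ) * w j → ∀ j, 0 ≤ B.repr w j := by
  set φ : (Fin (d+1) → ℤ) → ℤ := fun w => ∑ j : Fin (d+1), N ^ (j : ℕ) * w j with hφ
  have φsucc : ∀ w : Fin (d+1) → ℤ,
      φ w = w 0 + ∑ i : Fin d, N ^ ((i : ℕ) + 1) * w i.succ := by
    intro w
    simp only [hφ, Fin.sum_univ_succ, Fin.val_zero, pow_zero, one_mul, Fin.val_succ]
  have φadd : ∀ a b, φ (a + b) = φ a + φ b := by
    intro a b
    simp only [hφ, Pi.add_apply, mul_add, Finset.sum_add_distrib]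
  have φsmul : ∀ (z : ℤ) a, φ (z • a) = z * φ a := by
    intro z a
    simp only [hφ, Pi.smul_apply, smul_eq_mul, Finset.mul_sum]
    exact Finset.sum_congr rfl fun j _ => by ring
  set f : (Fin (d+1) → ℤ) → (Fin (d+1) → ℤ) :=
    fun w j => if (j : ℕ) = 0 then φ w else N * φ w + w j with hf
  set g : (Fin (d+1) → ℤ) → (Fin (d+1) → ℤ) :=
    fun c j => if (j : ℕ) = 0 then
      c 0 + ∑ i : Fin d, N ^ ((i : ℕ) + 1) * (N * c 0 - c i.succ)
    else c j - N * c 0 with hg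
  have f0 : ∀ w, f w 0 = φ w := fun w => if_pos rfl
  have fsucc : ∀ w (i : Fin d), f w i.succ = N * φ w + w i.succ := by
    intro w i; simp [hf]
  have g0 : ∀ c, g c 0 = c 0 + ∑ i : Fin d, N ^ ((i : ℕ) + 1) * (N * c 0 - c i.succ) :=
    fun c => if_pos rfl
  have gsucc : ∀ c (i : Fin d), g c i.succ = c i.succ - N * c 0 := by
    intro c i; simp [hg]
  have hgf : ∀ w, g (f w) = w := by
    intro w
    funext j
    refine Fin.cases ?_ (fun i => ?_) j
    · rw [g0, f0]
      have hterm : ∀ i ∈ (Finset.univ : Finset (Fin d)),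
          N ^ ((i : ℕ) + 1) * (N * φ w - f w i.succ)
          = -(N ^ ((i : ℕ) + 1) * w i.succ) := fun i _ => by rw [fsucc]; ring
      rw [Finset.sum_congr rfl hterm, Finset.sum_neg_distrib, φsucc]
      ring
    · rw [gsucc, fsucc, f0]
      ring
  have hfg : ∀ c, f (g c) = c := by
    intro c
    have hφg : φ (g c) = c 0 := by
      rw [φsucc, g0]
      have hterm : ∀ i ∈ (Finset.univ : Finset (Fin d)),
          N ^ ((i : ℕ) + 1) * g c i.succ
          = N ^ ((i : ℕ) + 1) * (c i.succ - N * c 0) := fun i _ => by rw [gsucc]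
      rw [Finset.sum_congr rfl hterm]
      have hz : (∑ i : Fin d, N ^ ((i : ℕ) + 1) * (N * c 0 - c i.succ))
          + ∑ i : Fin d, N ^ ((i : ℕ) + 1) * (c i.succ - N * c 0) = 0 := by
        rw [← Finset.sum_add_distrib]
        exact Finset.sum_eq_zero fun i _ => by ring
      linarith
    funext j
    refine Fin.cases ?_ (fun i => ?_) j
    · rw [f0, hφg]
    · rw [fsucc, hφg, gsucc]
      ring
  refine ⟨Module.Basis.ofEquivFun
    { toFun := f
      map_add' := fun a b => by
        funext j
        simp only [Pi.add_apply]
        refine Fin.cases ?_ (fun i => ?_) j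
        · rw [f0, f0, f0, φadd]
        · rw [fsucc, fsucc, fsucc, φadd]; simp only [Pi.add_apply]; ring
      map_smul' := fun z a => by
        funext j
        simp only [RingHom.id_apply, Pi.smul_apply, smul_eq_mul]
        refine Fin.cases ?_ (fun i => ?_) j
        · rw [f0, f0, φsmul]
        · rw [fsucc, fsucc, φsmul]; simp only [Pi.smul_apply, smul_eq_mul]; ring
      invFun := g
      left_inv := hgf
      right_inv := hfg }, ?_⟩
  intro w hb h1 j
  rw [Module.Basis.ofEquivFun_repr_apply]
  have h1' : 1 ≤ φ w := h1
  refine Fin.cases ?_ (fun i => ?_) j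
  · show (0:ℤ) ≤ f w 0
    rw [f0]; linarith
  · show (0:ℤ) ≤ f w i.succ
    rw [fsucc]
    have := hb i.succ
    have := neg_abs_le (w i.succ)
    nlinarith

/-- Every arrangement of subtori admits a positive system.  The character
lattice is `Λ = ℤ^d` (modelled as `Fin d → ℤ`), and each subtorus `S_i` determines the
subgroup `Λ_i ⊆ Λ` of characters constant on `S_i`, modelled as a submodule `Λi i`.
There exist a `ℤ`-basis `B` of `Λ` and, for each `i`, a `ℤ`-basis `Bi` of `Λ_i`, such
that every element of every `Bi` has nonnegative coordinates in the basis `B`. -/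
theorem exists_positive_system (d n : ℕ) (Λi : Fin n → Submodule ℤ (Fin d → ℤ)) :
    ∃ B : Module.Basis (Fin d) ℤ (Fin d → ℤ), ∀ i : Fin n, ∃ (m : ℕ)
      (Bi : Module.Basis (Fin m) ℤ (Λi i)),
      ∀ (k : Fin m) (j : Fin d), 0 ≤ B.repr ((Bi k : Fin d → ℤ)) j := by
  cases d with
  | zero =>
    refine ⟨Pi.basisFun ℤ (Fin 0), fun i => ?_⟩
    obtain ⟨m, Bi⟩ := Submodule.basisOfPid (Pi.basisFun ℤ (Fin 0)) (Λi i)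
    exact ⟨m, Bi, fun k j => j.elim0⟩
  | succ d =>
    set bs := fun i => Submodule.basisOfPid (Pi.basisFun ℤ (Fin (d+1))) (Λi i) with hbs
    set C : ℕ := Finset.univ.sup (fun i : Fin n => Finset.univ.sup fun k : Fin (bs i).1 =>
      Finset.univ.sup fun j : Fin (d+1) => (((bs i).2 k : Fin (d+1) → ℤ) j).natAbs) with hC
    set N : ℤ := (C : ℤ) + 1 with hNdef
    have hN : 1 ≤ N := by rw [hNdef]; omega
    have hbound : ∀ (i : Fin n) (k : Fin (bs i).1) (j : Fin (d+1)),
        |((bs i).2 k : Fin (d+1) → ℤ) j| < N := by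
      intro i k j
      have h1 : (((bs i).2 k : Fin (d+1) → ℤ) j).natAbs ≤ C := by
        calc (((bs i).2 k : Fin (d+1) → ℤ) j).natAbs
            ≤ Finset.univ.sup fun j : Fin (d+1) => (((bs i).2 k : Fin (d+1) → ℤ) j).natAbs :=
              Finset.le_sup (f := fun j : Fin (d+1) => (((bs i).2 k : Fin (d+1) → ℤ) j).natAbs)
                (Finset.mem_univ j)
          _ ≤ Finset.univ.sup fun k : Fin (bs i).1 =>
              Finset.univ.sup fun j : Fin (d+1) => (((bs i).2 k : Fin (d+1) → ℤ) j).natAbs :=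
              Finset.le_sup (f := fun k : Fin (bs i).1 =>
                Finset.univ.sup fun j : Fin (d+1) => (((bs i).2 k : Fin (d+1) → ℤ) j).natAbs)
                (Finset.mem_univ k)
          _ ≤ C :=
              Finset.le_sup (f := fun i : Fin n => Finset.univ.sup fun k : Fin (bs i).1 =>
                Finset.univ.sup fun j : Fin (d+1) => (((bs i).2 k : Fin (d+1) → ℤ) j).natAbs)
                (Finset.mem_univ i)
      rw [Int.abs_eq_natAbs, hNdef]
      exact_mod_cast Nat.lt_succ_of_le h1
    obtain ⟨B, hB⟩ := exists_nonneg_basis d N hN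
    refine ⟨B, fun i => ?_⟩
    have hφne : ∀ k : Fin (bs i).1,
        (∑ j : Fin (d+1), N ^ (j : ℕ) * ((bs i).2 k : Fin (d+1) → ℤ) j) ≠ 0 := by
      intro k h
      have hz := digit_zero N (by linarith) (d+1) _ (hbound i k) h
      have : ((bs i).2 k : Fin (d+1) → ℤ) = 0 := funext hz
      exact Module.Basis.ne_zero ((bs i).2) k (Subtype.ext this)
    have hsign : ∀ k : Fin (bs i).1, ∃ u : ℤˣ,
        1 ≤ (u : ℤ) * ∑ j : Fin (d+1), N ^ (j : ℕ) * ((bs i).2 k : Fin (d+1) → ℤ) j := by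
      intro k
      rcases (hφne k).lt_or_gt with h | h
      · exact ⟨-1, by simpa using by omega⟩
      · exact ⟨1, by simpa using Int.add_one_le_iff.mpr h⟩
    choose ε hεs using hsign
    refine ⟨(bs i).1, ((bs i).2).unitsSMul ε, fun k j => ?_⟩
    have hcoe : ((((bs i).2).unitsSMul ε k : Λi i) : Fin (d+1) → ℤ)
        = (ε k : ℤ) • ((bs i).2 k : Fin (d+1) → ℤ) := by
      rw [Module.Basis.unitsSMul_apply]
      rfl
    rw [hcoe]
    set w : Fin (d+1) → ℤ := ((bs i).2 k : Fin (d+1) → ℤ) with hw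
    have hεcases : (ε k : ℤ) = 1 ∨ (ε k : ℤ) = -1 := Int.isUnit_iff.mp (ε k).isUnit
    refine hB ((ε k : ℤ) • w) (fun j' => ?_) ?_ j
    · have : |(ε k : ℤ) • w j'| = |w j'| := by
        rcases hεcases with h | h <;> simp [h, abs_neg]
      rw [Pi.smul_apply] at *
      rw [this]
      exact hbound i k j'
    · have hsum : ∑ j' : Fin (d+1), N ^ (j' : ℕ) * ((ε k : ℤ) • w) j'
          = (ε k : ℤ) * ∑ j' : Fin (d+1), N ^ (j' : ℕ) * w j' := by
        rw [Finset.mul_sum]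
        exact Finset.sum_congr rfl fun j' _ => by simp [Pi.smul_apply]; ring
      rw [hsum]
      exact hεs k
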